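/- If f is convex decomposable, then in the infinite computation tree rooted at r, the total weight ρ of the set of self-returning walks from a vertex ĩ (with label i) to itself that never cross the edge (ĩ, j̃) equals γ*_{ij}. -/

import Mathlib

open Classical Finset Matrix Filter

noncomputable section

/-- `i` and `j` are adjacent: there is an edge `(i,j) ∈ E` (recall `Γᵢⱼ ≠ 0` iff `(i,j) ∈ E`). -/
def Adj {n : ℕ} (Γ : Matrix (Fin n) (Fin n) ℝ) (i j : Fin n) : Prop :=
  i ≠ j ∧ Γ i j ≠ 0

/-- The neighbors `N(j)` of a vertex `j`. -/
def nbrs {n : ℕ} (Γ : Matrix (Fin n) (Fin n) ℝ) (j : Fin n) : Finset (Fin n) :=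
  Finset.univ.filter (fun i => Adj Γ i j)

/-- `Σ_{u ∈ N(i)\{j}} Γ_{ui}² γ_{ui}`. -/
def Ssum {n : ℕ} (Γ : Matrix (Fin n) (Fin n) ℝ) (γ : Fin n → Fin n → ℝ)
    (i j : Fin n) : ℝ :=
  ∑ u ∈ Finset.univ.filter (fun u => Adj Γ u i ∧ u ≠ j), (Γ u i) ^ 2 * γ u i

/-- The min-sum quadratic parameter operator `F_{ij}(γ) = 1/(1 − Σ_{u∈N(i)\{j}} Γ_{ui}² γ_{ui})`. -/
def Fop {n : ℕ} (Γ : Matrix (Fin n) (Fin n) ℝ) (γ : Fin n → Fin n → ℝ) :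
    Fin n → Fin n → ℝ :=
  fun i j => 1 / (1 - Ssum Γ γ i j)

/-- The domain `D` of the operator `F`. -/
def DomD {n : ℕ} (Γ : Matrix (Fin n) (Fin n) ℝ) : Set (Fin n → Fin n → ℝ) :=
  {γ | ∀ i j, Adj Γ i j → Ssum Γ γ i j < 1}

/-- `v` is the quadratic-parameter vector of a convex decomposition: `v > 0` on edges,
`Γᵢⱼ²vᵢⱼvⱼᵢ ≥ 1` on edges, and `Σ_{i∈N(j)} Γᵢⱼ²vᵢⱼ < 1` at every vertex. -/
def ConvVec {n : ℕ} (Γ : Matrix (Fin n) (Fin n) ℝ) (v : Fin n → Fin n → ℝ) : Prop :=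
  (∀ i j, Adj Γ i j → 0 < v i j) ∧
  (∀ i j, Adj Γ i j → 1 ≤ (Γ i j) ^ 2 * v i j * v j i) ∧
  (∀ j, ∑ i ∈ nbrs Γ j, (Γ i j) ^ 2 * v i j < 1)

/-- A walk is non-backtracking if `w_{k} ≠ w_{k+2}` for all `k`. -/
def NonBT {n : ℕ} (l : List (Fin n)) : Prop :=
  ∀ (k : ℕ) (h : k + 2 < l.length), l.get ⟨k, by omega⟩ ≠ l.get ⟨k + 2, h⟩

/-- A vertex of the infinite computation tree rooted at `r`: a (finite) non-backtracking
path in the graph starting at `r`.  Its label is its last vertex. -/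
def TVert {n : ℕ} (Γ : Matrix (Fin n) (Fin n) ℝ) (r : Fin n) : Type :=
  {l : List (Fin n) // l ≠ [] ∧ l.head? = some r ∧ l.Chain' (Adj Γ) ∧ NonBT l}

/-- The label in the original graph of a computation tree vertex. -/
def tlabel {n : ℕ} {Γ : Matrix (Fin n) (Fin n) ℝ} {r : Fin n} (v : TVert Γ r) :
    Fin n :=
  v.val.getLast v.prop.1

/-- Adjacency in the computation tree: one path extends the other by one vertex. -/
def TAdj {n : ℕ} {Γ : Matrix (Fin n) (Fin n) ℝ} {r : Fin n} (v w : TVert Γ r) : Prop :=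
  (∃ a, w.val = v.val ++ [a]) ∨ (∃ a, v.val = w.val ++ [a])

/-- The weight `ρ` of a walk on the computation tree: the product of the entries of
`R = I − Γ` between the labels of consecutive tree vertices. -/
def treeW {n : ℕ} {r : Fin n} (Γ : Matrix (Fin n) (Fin n) ℝ)
    (L : List (TVert Γ r)) : ℝ :=
  ((L.zip L.tail).map (fun p => (1 - Γ) (tlabel p.1) (tlabel p.2))).prod

/-- The set of self-returning walks on the computation tree from `ĩ` back to `ĩ`
that never cross the tree edge `(ĩ, j̃)`. -/
def SelfRet {n : ℕ} {Γ : Matrix (Fin n) (Fin n) ℝ} {r : Fin n}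
    (iv jv : TVert Γ r) : Set (List (TVert Γ r)) :=
  {L | L ≠ [] ∧ L.Chain' TAdj ∧ L.head? = some iv ∧ L.getLast? = some iv ∧
    ∀ p ∈ L.zip L.tail, ¬((p.1 = iv ∧ p.2 = jv) ∨ (p.1 = jv ∧ p.2 = iv))}

section Aux

variable {n : ℕ} {Γ : Matrix (Fin n) (Fin n) ℝ} {r : Fin n}

variable {n : ℕ} {Γ : Matrix (Fin n) (Fin n) ℝ} {r : Fin n}

lemma TVert.ext' {a b : TVert Γ r} (h : a.val = b.val) : a = b := Subtype.ext h

lemma tadj_symm {a b : TVert Γ r} (h : TAdj a b) : TAdj b a := h.elim Or.inr Or.inl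

lemma tadj_ne {a b : TVert Γ r} (h : TAdj a b) : a ≠ b := by
  rintro rfl
  rcases h with ⟨x, hx⟩ | ⟨x, hx⟩ <;>
  · have := congrArg List.length hx; simp at this

lemma adj_symm (hsym : Γ.IsSymm) {i j : Fin n} (h : Adj Γ i j) : Adj Γ j i := by
  refine ⟨Ne.symm h.1, ?_⟩
  rw [hsym.apply i j]; exact h.2

-- label of a snoc
lemma tlabel_of_append {a b : TVert Γ r} {x : Fin n} (h : b.val = a.val ++ [x]) :
    tlabel b = x := by
  unfold tlabel
  simp only [h]
  exact List.getLast_append _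

lemma chain'_last_adj {l : List (Fin n)} {x : Fin n} (hc : (l ++ [x]).Chain' (Adj Γ))
    (hl : l ≠ []) : Adj Γ (l.getLast hl) x := by
  rw [List.Chain', List.isChain_append] at hc
  exact hc.2.2 _ (by rw [List.getLast?_eq_getLast hl]; rfl) _ rfl

lemma tadj_label (hsym : Γ.IsSymm) {a b : TVert Γ r} (h : TAdj a b) :
    Adj Γ (tlabel b) (tlabel a) := by
  rcases h with ⟨x, hx⟩ | ⟨x, hx⟩
  · rw [tlabel_of_append hx]
    have hc := b.prop.2.2.1
    rw [hx] at hc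
    exact adj_symm hsym (chain'_last_adj hc a.prop.1)
  · rw [tlabel_of_append hx]
    have hc := a.prop.2.2.1
    rw [hx] at hc
    have := chain'_last_adj hc b.prop.1
    unfold tlabel; exact this

lemma treeW_nil : treeW Γ ([] : List (TVert Γ r)) = 1 := rfl

lemma treeW_single (a : TVert Γ r) : treeW Γ [a] = 1 := rfl

lemma treeW_cons_cons (a b : TVert Γ r) (t : List (TVert Γ r)) :
    treeW Γ (a :: b :: t) = (1 - Γ) (tlabel a) (tlabel b) * treeW Γ (b :: t) := by
  simp [treeW]

lemma treeW_cons (a : TVert Γ r) {l : List (TVert Γ r)} (hl : l ≠ []) :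
    treeW Γ (a :: l) = (1 - Γ) (tlabel a) (tlabel (l.head hl)) * treeW Γ l := by
  obtain ⟨b, t, rfl⟩ := List.exists_cons_of_ne_nil hl
  simpa using treeW_cons_cons a b t

lemma treeW_append {p q : List (TVert Γ r)} (hp : p ≠ []) (hq : q ≠ []) :
    treeW Γ (p ++ q) =
      treeW Γ p * (1 - Γ) (tlabel (p.getLast hp)) (tlabel (q.head hq)) * treeW Γ q := by
  induction p with
  | nil => exact absurd rfl hp
  | cons a t ih =>
    rcases eq_or_ne t [] with rfl | ht
    · simp only [List.singleton_append]
      rw [treeW_cons a (by simpa using hq), treeW_single]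
      simp [List.getLast]
    · have : (a :: t) ++ q = a :: (t ++ q) := rfl
      rw [this, treeW_cons a (by simp [ht]), ih ht,
        treeW_cons a ht]
      have h1 : (t ++ q).head (by simp [ht]) = t.head ht := by
        obtain ⟨b, t', rfl⟩ := List.exists_cons_of_ne_nil ht; rfl
      have h2 : (a :: t).getLast (by simp) = t.getLast ht := List.getLast_cons ht
      rw [h1, h2]; ring

lemma prefix_snoc_of_le {α : Type*} {p l : List α} {d : α}
    (h : p <+: l ++ [d]) (hlen : p.length ≤ l.length) : p <+: l := by
  rw [List.prefix_iff_eq_take] at h ⊢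
  rwa [List.take_append_of_le_length hlen] at h

lemma snoc_inj_left {α : Type*} {a b : List α} {c d : α}
    (h : a ++ [c] = b ++ [d]) : a = b := by
  have := congrArg List.dropLast h
  simpa [List.dropLast_concat] using this

/-- Invariant propagation along a chain avoiding the crossing `(x,y)`. -/
lemma chain_inv (P : TVert Γ r → Prop) {x y : TVert Γ r}
    (step : ∀ w1 w2, P w1 → TAdj w1 w2 → ¬(w1 = x ∧ w2 = y) → P w2) :
    ∀ (p : List (TVert Γ r)), p.Chain' TAdj →
      (∀ pr ∈ p.zip p.tail, ¬((pr.1 = x ∧ pr.2 = y) ∨ (pr.1 = y ∧ pr.2 = x))) →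
      ∀ w, p.head? = some w → P w → ∀ z ∈ p, P z := by
  intro p
  induction p with
  | nil => intro _ _ w _ _ z hz; simp at hz
  | cons a t ih =>
    intro hc hcr w hw hPw z hz
    have haw : a = w := by simpa using hw
    subst haw
    rcases List.mem_cons.mp hz with rfl | hz
    · exact hPw
    rcases t with _ | ⟨b, t'⟩
    · simp at hz
    · have hab : TAdj a b := (List.isChain_cons_cons.mp hc).1
      have hpair : ¬((a = x ∧ b = y) ∨ (a = y ∧ b = x)) := by
        apply hcr (a, b); simp [List.zip_cons_cons]
      have hPb : P b := step a b hPw hab (fun h => hpair (Or.inl h))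
      refine ih (List.isChain_cons_cons.mp hc).2 ?_ b rfl hPb z hz
      intro pr hpr
      refine hcr pr ?_
      simp only [List.tail_cons, List.zip_cons_cons] at hpr ⊢
      exact List.mem_cons_of_mem _ hpr

/-- The "side" lemma: a chain starting at `x` that never crosses the tree edge `(x,y)`
stays on `x`'s side: it never meets `y`, and the only element tree-adjacent to `y`
it can meet is `x` itself. -/
lemma side_lemma {x y : TVert Γ r} (hxy : TAdj x y) {p : List (TVert Γ r)}
    (hc : p.Chain' TAdj) (hh : p.head? = some x)
    (hcross : ∀ pr ∈ p.zip p.tail, ¬((pr.1 = x ∧ pr.2 = y) ∨ (pr.1 = y ∧ pr.2 = x))) :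
    ∀ z ∈ p, z ≠ y ∧ (TAdj z y → z = x) := by
  rcases hxy with ⟨c, hcy⟩ | ⟨c, hcx⟩
  · -- y is a child of x : y.val = x.val ++ [c]
    have hly : y.val.length = x.val.length + 1 := by rw [hcy]; simp
    have step : ∀ w1 w2, (¬ (y.val <+: w1.val)) → TAdj w1 w2 → ¬(w1 = x ∧ w2 = y) →
        ¬ (y.val <+: w2.val) := by
      intro w1 w2 h1 h12 hne
      rcases h12 with ⟨d, hd⟩ | ⟨d, hd⟩
      · intro hpre
        rw [hd] at hpre
        by_cases hlen : y.val.length ≤ w1.val.length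
        · exact h1 (prefix_snoc_of_le hpre hlen)
        · have hle := hpre.length_le
          have heq : y.val = w1.val ++ [d] := by
            apply hpre.eq_of_length; simp at hle ⊢; omega
          have hw2 : w2 = y := TVert.ext' (by rw [hd, ← heq])
          have hw1 : w1 = x := by
            apply TVert.ext'
            exact snoc_inj_left (heq.symm.trans hcy)
          exact hne ⟨hw1, hw2⟩
      · intro hpre
        apply h1
        rw [hd]
        exact hpre.trans (List.prefix_append _ _)
    have hall : ∀ z ∈ p, ¬ (y.val <+: z.val) := by
      refine chain_inv _ step p hc hcross x hh ?_
      intro hpre; have := hpre.length_le; omega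
    intro z hz
    have hPz := hall z hz
    constructor
    · rintro rfl; exact hPz (List.prefix_refl _)
    · intro hzy
      rcases hzy with ⟨d, hd⟩ | ⟨d, hd⟩
      · apply TVert.ext'
        exact snoc_inj_left (hd.symm.trans hcy)
      · exfalso; apply hPz; rw [hd]; exact List.prefix_append _ _
  · -- x is a child of y : x.val = y.val ++ [c]
    have hlx : x.val.length = y.val.length + 1 := by rw [hcx]; simp
    have step : ∀ w1 w2, (x.val <+: w1.val) → TAdj w1 w2 → ¬(w1 = x ∧ w2 = y) →
        (x.val <+: w2.val) := by
      intro w1 w2 h1 h12 hne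
      rcases h12 with ⟨d, hd⟩ | ⟨d, hd⟩
      · rw [hd]; exact h1.trans (List.prefix_append _ _)
      · by_cases hlen : x.val.length ≤ w2.val.length
        · exact prefix_snoc_of_le (d := d) (by rw [← hd]; exact h1) hlen
        · exfalso
          have hl1 : w1.val.length = w2.val.length + 1 := by rw [hd]; simp
          have hxl : x.val.length ≤ w1.val.length := h1.length_le
          have heq : x.val = w1.val := h1.eq_of_length (by omega)
          have hw1 : w1 = x := TVert.ext' heq.symm
          have hw2 : w2 = y := by
            apply TVert.ext'
            have h2 := congrArg List.dropLast hd
            rw [List.dropLast_concat] at h2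
            rw [← h2, ← heq, hcx, List.dropLast_concat]
          exact hne ⟨hw1, hw2⟩
    have hall : ∀ z ∈ p, (x.val <+: z.val) := by
      exact chain_inv _ step p hc hcross x hh (List.prefix_refl _)
    intro z hz
    have hPz := hall z hz
    constructor
    · rintro rfl
      have := hPz.length_le; omega
    · intro hzy
      rcases hzy with ⟨d, hd⟩ | ⟨d, hd⟩
      · exfalso
        have : y.val.length = z.val.length + 1 := by rw [hd]; simp
        have := hPz.length_le
        omega
      · apply TVert.ext'
        refine (hPz.eq_of_length ?_).symm
        have : z.val.length = y.val.length + 1 := by rw [hd]; simp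
        omega

/-! ### children and parent constructions -/

lemma nonBT_snoc {l : List (Fin n)} (h : NonBT l) {u : Fin n}
    (hu : ∀ (h2 : 2 ≤ l.length), l[l.length - 2]'(by omega) ≠ u) :
    NonBT (l ++ [u]) := by
  intro k hk
  simp only [List.length_append, List.length_singleton] at hk
  simp only [List.get_eq_getElem]
  by_cases hlt : k + 2 < l.length
  · rw [List.getElem_append_left (by omega), List.getElem_append_left hlt]
    have := h k hlt
    simpa using this
  · have hke : k + 2 = l.length := by omega
    rw [List.getElem_append_left (by omega), List.getElem_append_right (by omega)]
    have h2 : 2 ≤ l.length := by omega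
    have := hu h2
    simp only [hke]
    simpa [show l.length - l.length = 0 by omega, show k = l.length - 2 by omega] using this

lemma nonBT_dropLast {l : List (Fin n)} (h : NonBT l) : NonBT l.dropLast := by
  intro k hk
  simp only [List.length_dropLast] at hk
  simp only [List.get_eq_getElem, List.getElem_dropLast]
  have := h k (by omega)
  simpa using this

def mkChild (a : TVert Γ r) (u : Fin n) (hadj : Adj Γ (tlabel a) u)
    (hnb : ∀ (h2 : 2 ≤ a.val.length), a.val[a.val.length - 2]'(by omega) ≠ u) :
    TVert Γ r := by
  refine ⟨a.val ++ [u], by simp, ?_, ?_, nonBT_snoc a.prop.2.2.2 hnb⟩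
  · rw [List.head?_append_of_ne_nil _ a.prop.1]; exact a.prop.2.1
  · rw [List.Chain', List.isChain_append]
    refine ⟨a.prop.2.2.1, List.isChain_singleton _, ?_⟩
    intro x hx y hy
    rw [List.getLast?_eq_getLast a.prop.1] at hx
    simp only [Option.mem_def, Option.some.injEq] at hx
    simp only [List.head?_cons, Option.mem_def, Option.some.injEq] at hy
    subst hx; subst hy
    exact hadj

lemma mkChild_val (a : TVert Γ r) (u hadj hnb) :
    (mkChild a u hadj hnb).val = a.val ++ [u] := rfl

lemma tadj_mkChild (a : TVert Γ r) (u hadj hnb) : TAdj a (mkChild a u hadj hnb) :=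
  Or.inl ⟨u, rfl⟩

lemma tlabel_mkChild (a : TVert Γ r) (u hadj hnb) : tlabel (mkChild a u hadj hnb) = u :=
  tlabel_of_append rfl

def mkParent (a : TVert Γ r) (h2 : 2 ≤ a.val.length) : TVert Γ r := by
  refine ⟨a.val.dropLast, ?_, ?_, a.prop.2.2.1.prefix (List.dropLast_prefix _),
    nonBT_dropLast a.prop.2.2.2⟩
  · intro hnil
    have := congrArg List.length hnil
    simp [List.length_dropLast] at this
    omega
  · rcases hval : a.val with _ | ⟨x, t⟩
    · exact absurd hval a.prop.1
    rcases t with _ | ⟨y, t'⟩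
    · rw [hval] at h2; simp at h2
    have h : (x :: y :: t').head? = some r := by rw [← hval]; exact a.prop.2.1
    rw [List.dropLast_cons₂]
    simpa using h

lemma mkParent_val (a : TVert Γ r) (h2) : (mkParent a h2).val = a.val.dropLast := rfl

lemma tadj_mkParent (a : TVert Γ r) (h2) : TAdj a (mkParent a h2) :=
  Or.inr ⟨a.val.getLast a.prop.1, (List.dropLast_append_getLast a.prop.1).symm⟩

lemma tlabel_mkParent (a : TVert Γ r) (h2 : 2 ≤ a.val.length) :
    tlabel (mkParent a h2) = a.val[a.val.length - 2]'(by omega) := by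
  unfold tlabel
  rw [List.getLast_eq_getElem]
  simp only [mkParent_val, List.getElem_dropLast, List.length_dropLast]
  congr 1

/-! ### neighbor classification -/

lemma nbr_label_inj {a w w' : TVert Γ r} (hw : TAdj a w) (hw' : TAdj a w')
    (hl : tlabel w = tlabel w') : w = w' := by
  -- distinct tree-neighbors of `a` have distinct labels
  have key : ∀ {z z' : TVert Γ r} {x x' : Fin n},
      z.val = a.val ++ [x] → a.val = z'.val ++ [x'] → tlabel z ≠ tlabel z' := by
    intro z z' x x' hz hz'
    have hlz : tlabel z = x := tlabel_of_append hz
    have hlen : 2 ≤ a.val.length := by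
      rw [hz']
      have : 0 < z'.val.length := List.length_pos_iff.mpr z'.prop.1
      simp; omega
    have hz'd : z'.val = a.val.dropLast := by rw [hz', List.dropLast_concat]
    have hlz' : tlabel z' = a.val[a.val.length - 2]'(by omega) := by
      unfold tlabel
      rw [List.getLast_eq_getElem]
      have hlen' : z'.val.length = a.val.length - 1 := by
        rw [hz'd, List.length_dropLast]
      simp only [hz'd, List.getElem_dropLast, List.length_dropLast]
      congr 1
    rw [hlz, hlz']
    -- NonBT of z forbids equality
    have hnb := z.prop.2.2.2
    intro heq
    have hklt : (a.val.length - 2) + 2 < z.val.length := by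
      rw [hz]; simp; omega
    have hthis := hnb (a.val.length - 2) hklt
    apply hthis
    have e1 : z.val[a.val.length - 2]'(by omega) = x := by
      rw [List.getElem_of_eq hz]
      rw [List.getElem_append_left (by omega)]
      exact heq.symm
    have e2 : z.val[a.val.length - 2 + 2]'(by omega) = x := by
      rw [List.getElem_of_eq hz]
      rw [List.getElem_append_right (by omega)]
      simp [show a.val.length - 2 + 2 - a.val.length = 0 by omega]
    simp only [List.get_eq_getElem]
    rw [e1, e2]
  rcases hw with ⟨x, hx⟩ | ⟨x, hx⟩ <;> rcases hw' with ⟨x', hx'⟩ | ⟨x', hx'⟩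
  · -- both children
    apply TVert.ext'
    rw [hx, hx']
    have h1 : tlabel w = x := tlabel_of_append hx
    have h2 : tlabel w' = x' := tlabel_of_append hx'
    rw [h1, h2] at hl; rw [hl]
  · exact absurd hl (key hx hx')
  · exact absurd hl.symm (key hx' hx)
  · -- both parents
    apply TVert.ext'
    have := hx.symm.trans hx'
    exact snoc_inj_left this

lemma nbr_adj_labels (hsym : Γ.IsSymm) {a b w : TVert Γ r} (hab : TAdj a b)
    (haw : TAdj a w) (hwb : w ≠ b) :
    Adj Γ (tlabel w) (tlabel a) ∧ tlabel w ≠ tlabel b := by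
  refine ⟨tadj_label hsym haw, ?_⟩
  intro heq
  exact hwb (nbr_label_inj haw hab heq)

lemma nbr_exists (hsym : Γ.IsSymm) {a b : TVert Γ r} (hab : TAdj a b) {u : Fin n}
    (hu : Adj Γ u (tlabel a)) (huj : u ≠ tlabel b) :
    ∃ w : TVert Γ r, TAdj a w ∧ w ≠ b ∧ tlabel w = u := by
  by_cases h2 : ∃ (h2 : 2 ≤ a.val.length), a.val[a.val.length - 2]'(by omega) = u
  · obtain ⟨h2, hu2⟩ := h2
    refine ⟨mkParent a h2, tadj_mkParent a h2, ?_, by rw [tlabel_mkParent]; exact hu2⟩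
    intro heq
    apply huj
    rw [← heq, tlabel_mkParent, hu2]
  · push_neg at h2
    refine ⟨mkChild a u (adj_symm hsym hu) (fun hh => h2 hh), tadj_mkChild a u _ _, ?_,
      tlabel_mkChild a u _ _⟩
    intro heq
    apply huj
    rw [← heq, tlabel_mkChild]

/-! ### consecutive-pairs lemmas -/

lemma pairs_cons {α : Type*} (x : α) {l : List α} (hl : l ≠ []) :
    (x :: l).zip (x :: l).tail = (x, l.head hl) :: l.zip l.tail := by
  obtain ⟨y, t, rfl⟩ := List.exists_cons_of_ne_nil hl
  simp [List.zip_cons_cons]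

lemma pairs_mem_cons {α : Type*} {x : α} {l : List α} {pr : α × α}
    (h : pr ∈ l.zip l.tail) : pr ∈ (x :: l).zip (x :: l).tail := by
  cases l with
  | nil => simp at h
  | cons y t =>
    simp only [List.tail_cons, List.zip_cons_cons] at *
    exact List.mem_cons_of_mem _ h

lemma pairs_mem_append_right {α : Type*} (l1 : List α) {l2 : List α} {pr : α × α}
    (h : pr ∈ l2.zip l2.tail) : pr ∈ (l1 ++ l2).zip (l1 ++ l2).tail := by
  induction l1 with
  | nil => simpa
  | cons x t ih => exact pairs_mem_cons ih

lemma head_append_ne_nil {α : Type*} {l1 l2 : List α} (h1 : l1 ≠ []) :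
    (l1 ++ l2).head (by simp [h1]) = l1.head h1 := by
  obtain ⟨y, t, rfl⟩ := List.exists_cons_of_ne_nil h1
  rfl

lemma pairs_append_cases {α : Type*} {l1 l2 : List α} (h1 : l1 ≠ []) (h2 : l2 ≠ []) :
    ∀ pr ∈ (l1 ++ l2).zip (l1 ++ l2).tail,
      pr ∈ l1.zip l1.tail ∨ pr ∈ l2.zip l2.tail ∨ pr = (l1.getLast h1, l2.head h2) := by
  induction l1 with
  | nil => exact absurd rfl h1
  | cons x t ih =>
    intro pr hpr
    rcases eq_or_ne t [] with rfl | ht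
    · simp only [List.singleton_append] at hpr
      rw [pairs_cons x h2] at hpr
      rcases List.mem_cons.mp hpr with rfl | hpr
      · right; right; rfl
      · right; left; exact hpr
    · have hne : t ++ l2 ≠ [] := by simp [ht]
      have : (x :: t) ++ l2 = x :: (t ++ l2) := rfl
      rw [this, pairs_cons x hne] at hpr
      rcases List.mem_cons.mp hpr with rfl | hpr
      · left
        rw [pairs_cons x ht]
        rw [head_append_ne_nil ht]
        exact List.mem_cons_self
      · rcases ih ht pr hpr with h | h | h
        · left; exact pairs_mem_cons h
        · right; left; exact h
        · right; right; rw [h]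
          congr 1
          exact (List.getLast_cons ht).symm

lemma first_occ {α : Type*} {x : α} {t : List α} (h : x ∈ t) [DecidableEq α] :
    ∃ p q, t = p ++ q ∧ x ∉ p ∧ q.head? = some x := by
  induction t with
  | nil => simp at h
  | cons y t' ih =>
    by_cases hxy : y = x
    · exact ⟨[], y :: t', rfl, by simp, by simp [hxy]⟩
    · have hx' : x ∈ t' := by
        rcases List.mem_cons.mp h with h | h
        · exact absurd h.symm hxy
        · exact h
      obtain ⟨p, q, hpq, hxp, hq⟩ := ih hx'
      exact ⟨y :: p, q, by simp [hpq], by simp [hxp, Ne.symm hxy], hq⟩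

lemma append_eq_append_of_nomem {α : Type*} {p q p' q' : List α} {a : α}
    (h : p ++ q = p' ++ q') (hp : a ∉ p) (hp' : a ∉ p')
    (hq : q.head? = some a) (hq' : q'.head? = some a) : p = p' ∧ q = q' := by
  induction p generalizing p' with
  | nil =>
    cases p' with
    | nil => simpa using h
    | cons x t =>
      exfalso
      apply hp'
      have : q.head? = some x := by
        have h' : q = x :: (t ++ q') := by simpa using h
        rw [h']; rfl
      rw [hq] at this
      simp only [Option.some.injEq] at this
      simp [← this]
  | cons x t ih =>
    cases p' with
    | nil =>
      exfalso
      apply hp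
      have : q'.head? = some x := by
        have h' : q' = x :: (t ++ q) := by
          have := h.symm; simpa using this
        rw [h']; rfl
      rw [hq'] at this
      simp only [Option.some.injEq] at this
      simp [← this]
    | cons x' t' =>
      simp only [List.cons_append, List.cons.injEq] at h
      obtain ⟨rfl, h2⟩ := h
      have := ih h2 (by simp at hp; exact hp.2) (by simp at hp'; exact hp'.2)
      exact ⟨by rw [this.1], this.2⟩

/-! ### properties of self-returning walks -/

lemma selfRet_ne {x y : TVert Γ r} {p : List (TVert Γ r)} (hp : p ∈ SelfRet x y) :
    p ≠ [] := hp.1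

lemma selfRet_head {x y : TVert Γ r} {p : List (TVert Γ r)} (hp : p ∈ SelfRet x y) :
    p.head hp.1 = x := by
  have := hp.2.2.1
  rw [List.head?_eq_head hp.1] at this
  simpa using this

lemma selfRet_getLast {x y : TVert Γ r} {p : List (TVert Γ r)} (hp : p ∈ SelfRet x y) :
    p.getLast hp.1 = x := by
  have := hp.2.2.2.1
  rw [List.getLast?_eq_getLast hp.1] at this
  simpa using this

/-- elements of a self-returning walk at `x` avoiding the edge `(x,y)` stay on
`x`'s side of that edge. -/
lemma selfRet_side {x y : TVert Γ r} (hxy : TAdj x y) {p : List (TVert Γ r)}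
    (hp : p ∈ SelfRet x y) : ∀ z ∈ p, z ≠ y ∧ (TAdj z y → z = x) :=
  side_lemma hxy hp.2.1 hp.2.2.1 hp.2.2.2.2

lemma singleton_mem_selfRet {a b : TVert Γ r} : [a] ∈ SelfRet a b := by
  refine ⟨by simp, by simp [List.Chain'], rfl, rfl, by simp⟩

/-! ### the walk decomposition -/

lemma phi_mem {a b x : TVert Γ r} (hab : TAdj a b) (hax : TAdj a x) (hxb : x ≠ b)
    {p q : List (TVert Γ r)} (hp : p ∈ SelfRet x a) (hq : q ∈ SelfRet a b) :
    (a :: p ++ q) ∈ SelfRet a b := by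
  have hpne := hp.1
  have hqne := hq.1
  have hpqne : p ++ q ≠ [] := by simp [hpne]
  have hap : a ∉ p := by
    intro hmem
    exact ((selfRet_side (tadj_symm hax) hp) a hmem).1 rfl
  have hheadpq : (p ++ q).head? = some x := by
    rw [List.head?_append_of_ne_nil _ hpne, List.head?_eq_head hpne, selfRet_head hp]
  simp only [List.cons_append]
  refine ⟨by simp, ?_, rfl, ?_, ?_⟩
  · rw [List.Chain', List.isChain_cons]
    constructor
    · intro y hy
      rw [hheadpq] at hy
      simp only [Option.mem_def, Option.some.injEq] at hy
      subst hy; exact hax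
    · rw [List.isChain_append]
      refine ⟨hp.2.1, hq.2.1, ?_⟩
      intro z hz y hy
      rw [hp.2.2.2.1] at hz
      rw [hq.2.2.1] at hy
      simp only [Option.mem_def, Option.some.injEq] at hz hy
      subst hz; subst hy
      exact tadj_symm hax
  · have : a :: (p ++ q) = ([a] ++ p) ++ q := by simp
    rw [this, List.getLast?_append, hq.2.2.2.1]
    rfl
  · intro pr hpr
    rw [pairs_cons a hpqne] at hpr
    rcases List.mem_cons.mp hpr with rfl | hpr
    · rintro (⟨-, h2⟩ | ⟨h1, -⟩)
      · apply hxb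
        rw [← h2]
        rw [head_append_ne_nil hpne, selfRet_head hp]
      · exact tadj_ne hab h1
    · rcases pairs_append_cases hpne hqne pr hpr with h | h | h
      · have h1 := (List.of_mem_zip (show (pr.1, pr.2) ∈ p.zip p.tail from h)).1
        have h2 := (List.of_mem_zip (show (pr.1, pr.2) ∈ p.zip p.tail from h)).2
        have h2' : pr.2 ∈ p := List.tail_subset _ h2
        rintro (⟨h3, -⟩ | ⟨-, h4⟩)
        · exact hap (h3 ▸ h1)
        · exact hap (h4 ▸ h2')
      · exact hq.2.2.2.2 pr h
      · rw [h, selfRet_getLast hp, selfRet_head hq]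
        rintro (⟨h1, -⟩ | ⟨h1, -⟩)
        · exact tadj_ne hax h1.symm
        · exact hxb h1

lemma phi_weight (hsym : Γ.IsSymm) {a b x : TVert Γ r} (hax : TAdj a x)
    {p q : List (TVert Γ r)} (hp : p ∈ SelfRet x a) (hq : q ∈ SelfRet a b) :
    treeW Γ (a :: p ++ q) =
      (Γ (tlabel x) (tlabel a))^2 * (treeW Γ p * treeW Γ q) := by
  have hpne := hp.1
  have hqne := hq.1
  have hpqne : p ++ q ≠ [] := by simp [hpne]
  have hA : Adj Γ (tlabel x) (tlabel a) := tadj_label hsym hax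
  simp only [List.cons_append]
  rw [treeW_cons a hpqne, treeW_append hpne hqne]
  rw [head_append_ne_nil hpne, selfRet_head hp, selfRet_getLast hp, selfRet_head hq]
  have hne : tlabel a ≠ tlabel x := Ne.symm hA.1
  have e1 : (1 - Γ) (tlabel a) (tlabel x) = -Γ (tlabel a) (tlabel x) := by
    simp [Matrix.sub_apply, Matrix.one_apply_ne hne]
  have e2 : (1 - Γ) (tlabel x) (tlabel a) = -Γ (tlabel x) (tlabel a) := by
    simp [Matrix.sub_apply, Matrix.one_apply_ne hA.1]
  rw [e1, e2, hsym.apply (tlabel a) (tlabel x)]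
  ring

lemma phi_decomp {a b : TVert Γ r} (hab : TAdj a b) {L : List (TVert Γ r)}
    (hL : L ∈ SelfRet a b) (hne : L ≠ [a]) :
    ∃ (x : TVert Γ r) (p q : List (TVert Γ r)), TAdj a x ∧ x ≠ b ∧
      p ∈ SelfRet x a ∧ q ∈ SelfRet a b ∧ L = a :: p ++ q := by
  have hLne := hL.1
  obtain ⟨t, rfl⟩ : ∃ t, L = a :: t := by
    rcases hLv : L with _ | ⟨h0, t⟩
    · exact absurd hLv hLne
    · have : h0 = a := by
        have := hL.2.2.1
        rw [hLv] at this
        simpa using this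
      exact ⟨t, by rw [this]⟩
  have ht : t ≠ [] := by rintro rfl; exact hne rfl
  have hchain := hL.2.1
  have hchain' := (List.isChain_cons.mp hchain)
  have hchaint : t.Chain' TAdj := hchain'.2
  have hadjhead : TAdj a (t.head ht) := hchain'.1 _ (List.head?_eq_head ht)
  have hlastt : t.getLast ht = a := by
    have := selfRet_getLast hL
    rwa [List.getLast_cons ht] at this
  have hamem : a ∈ t := hlastt ▸ List.getLast_mem ht
  obtain ⟨p, q, hpq, hap, hqh⟩ := first_occ hamem
  have hqne : q ≠ [] := by rintro rfl; simp at hqh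
  have hpne : p ≠ [] := by
    rintro rfl
    simp only [List.nil_append] at hpq
    apply tadj_ne hadjhead
    subst hpq
    rw [List.head?_eq_head ht] at hqh
    simpa using hqh.symm
  -- pairs of L = (a, head t) :: pairs t
  have hpairsL := hL.2.2.2.2
  have hheadt : t.head ht = p.head hpne := by
    have h0 : t.head? = p.head? := by rw [hpq, List.head?_append_of_ne_nil _ hpne]
    rw [List.head?_eq_head ht, List.head?_eq_head hpne] at h0
    simpa using h0
  set x := p.head hpne with hx
  have hax : TAdj a x := by rw [← hheadt]; exact hadjhead
  have hpairt : ∀ pr ∈ t.zip t.tail,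
      ¬((pr.1 = a ∧ pr.2 = b) ∨ (pr.1 = b ∧ pr.2 = a)) := by
    intro pr hpr
    exact hpairsL pr (pairs_mem_cons hpr)
  have hxb : x ≠ b := by
    have hfirst : (a, t.head ht) ∈ (a :: t).zip (a :: t).tail := by
      rw [pairs_cons a ht]; exact List.mem_cons_self
    have := hpairsL _ hfirst
    intro hxb'
    refine this (Or.inl ⟨rfl, ?_⟩)
    show t.head ht = b
    rw [hheadt]
    exact hxb'
  have hchainp : p.Chain' TAdj := hchaint.prefix (hpq ▸ List.prefix_append p q)
  have hchainq : q.Chain' TAdj := hchaint.suffix (hpq ▸ List.suffix_append p q)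
  have hheadp : p.head? = some x := List.head?_eq_head hpne
  -- last element of p
  have hlastadj : TAdj (p.getLast hpne) a := by
    rw [hpq] at hchaint
    have := (List.isChain_append.mp hchaint).2.2
    have h2 := this (p.getLast hpne) (by rw [List.getLast?_eq_getLast hpne]; rfl)
      (q.head hqne) (by rw [List.head?_eq_head hqne]; rfl)
    rw [List.head?_eq_head hqne] at hqh
    simp only [Option.some.injEq] at hqh
    rwa [hqh] at h2
  have hcrossp : ∀ pr ∈ p.zip p.tail,
      ¬((pr.1 = x ∧ pr.2 = a) ∨ (pr.1 = a ∧ pr.2 = x)) := by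
    intro pr hpr
    have h1 := (List.of_mem_zip (show (pr.1, pr.2) ∈ p.zip p.tail from hpr)).1
    have h2 : pr.2 ∈ p := List.tail_subset _
      (List.of_mem_zip (show (pr.1, pr.2) ∈ p.zip p.tail from hpr)).2
    rintro (⟨-, h3⟩ | ⟨h3, -⟩)
    · exact hap (h3 ▸ h2)
    · exact hap (h3 ▸ h1)
  have hside := side_lemma (tadj_symm hax) hchainp hheadp hcrossp
  have hlastp : p.getLast hpne = x :=
    (hside _ (List.getLast_mem hpne)).2 hlastadj
  have hqlast : q.getLast? = some a := by
    have h1 : t.getLast? = some a := by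
      rw [List.getLast?_eq_getLast ht, hlastt]
    rw [hpq, List.getLast?_append, List.getLast?_eq_getLast hqne] at h1
    have h2 : q.getLast hqne = a := by simpa using h1
    rw [List.getLast?_eq_getLast hqne, h2]
  refine ⟨x, p, q, hax, hxb, ⟨hpne, hchainp, hheadp,
    by rw [List.getLast?_eq_getLast hpne, hlastp], hcrossp⟩,
    ⟨hqne, hchainq, hqh, hqlast, ?_⟩, by rw [hpq]; rfl⟩
  intro pr hpr
  exact hpairt pr (hpq ▸ pairs_mem_append_right p hpr)

lemma phi_inj {a b x x' : TVert Γ r} {p q p' q' : List (TVert Γ r)}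
    (hax : TAdj a x) (hp : p ∈ SelfRet x a) (hq : q ∈ SelfRet a b)
    (hp' : p' ∈ SelfRet x' a) (hq' : q' ∈ SelfRet a b)
    (hax' : TAdj a x')
    (h : (a :: p ++ q : List (TVert Γ r)) = a :: p' ++ q') :
    x = x' ∧ p = p' ∧ q = q' := by
  have h2 : p ++ q = p' ++ q' := by
    simp only [List.cons_append, List.cons.injEq] at h
    exact h.2
  have hap : a ∉ p := fun hm => ((selfRet_side (tadj_symm hax) hp) a hm).1 rfl
  have hap' : a ∉ p' := fun hm => ((selfRet_side (tadj_symm hax') hp') a hm).1 rfl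
  obtain ⟨hpp, hqq⟩ := append_eq_append_of_nomem h2 hap hap' hq.2.2.1 hq'.2.2.1
  refine ⟨?_, hpp, hqq⟩
  have e1 := hp.2.2.1
  have e2 := hp'.2.2.1
  rw [hpp] at e1
  rw [e1] at e2
  simpa using e2

/-! ### algebraic facts about `Fop` on a convex decomposition vector -/

lemma ssum_nonneg' {g : Fin n → Fin n → ℝ} (hg : ∀ u i, Adj Γ u i → 0 ≤ g u i)
    (i j : Fin n) : 0 ≤ Ssum Γ g i j := by
  apply Finset.sum_nonneg
  intro u hu
  rw [Finset.mem_filter] at hu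
  exact mul_nonneg (sq_nonneg _) (hg u i hu.2.1)

lemma ssum_mono' {g g' : Fin n → Fin n → ℝ} {i j : Fin n}
    (h : ∀ u, Adj Γ u i → u ≠ j → g u i ≤ g' u i) :
    Ssum Γ g i j ≤ Ssum Γ g' i j := by
  apply Finset.sum_le_sum
  intro u hu
  rw [Finset.mem_filter] at hu
  exact mul_le_mul_of_nonneg_left (h u hu.2.1 hu.2.2) (sq_nonneg _)

lemma nbrs_split (hsym : Γ.IsSymm) {i j : Fin n} (h : Adj Γ i j)
    (g : Fin n → Fin n → ℝ) :
    ∑ u ∈ nbrs Γ i, (Γ u i) ^ 2 * g u i = Ssum Γ g i j + (Γ j i) ^ 2 * g j i := by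
  have hji : Adj Γ j i := adj_symm hsym h
  have hsplit : nbrs Γ i =
      insert j (Finset.univ.filter (fun u => Adj Γ u i ∧ u ≠ j)) := by
    ext u
    simp only [nbrs, Finset.mem_filter, Finset.mem_insert, Finset.mem_univ, true_and]
    constructor
    · intro hu
      by_cases huj : u = j
      · exact Or.inl huj
      · exact Or.inr ⟨hu, huj⟩
    · rintro (rfl | ⟨hu, -⟩)
      · exact hji
      · exact hu
  rw [hsplit, Finset.sum_insert (by simp)]
  rw [Ssum]
  ring

lemma fop_facts (hsym : Γ.IsSymm) {v : Fin n → Fin n → ℝ} (hv : ConvVec Γ v)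
    {i j : Fin n} (h : Adj Γ i j) :
    0 ≤ Ssum Γ v i j ∧ (Γ j i) ^ 2 * v j i ≤ 1 - Ssum Γ v i j ∧
      0 < 1 - Ssum Γ v i j ∧ 1 ≤ Fop Γ v i j ∧ Fop Γ v i j < v i j ∧
      Fop Γ v i j * (1 - Ssum Γ v i j) = 1 := by
  have hji : Adj Γ j i := adj_symm hsym h
  have h0 : 0 ≤ Ssum Γ v i j := ssum_nonneg' (fun u i h => le_of_lt (hv.1 u i h)) i j
  have hvji : 0 < v j i := hv.1 j i hji
  have hgji : 0 < (Γ j i) ^ 2 := by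
    apply sq_pos_of_ne_zero
    exact hji.2
  have hG : 0 < (Γ j i) ^ 2 * v j i := mul_pos hgji hvji
  have htot := hv.2.2 i
  rw [nbrs_split hsym h v] at htot
  have h1 : (Γ j i) ^ 2 * v j i ≤ 1 - Ssum Γ v i j := by linarith
  have h2 : 0 < 1 - Ssum Γ v i j := lt_of_lt_of_le hG h1
  have h3 : 1 ≤ Fop Γ v i j := by
    rw [Fop]
    rw [le_div_iff₀ h2]
    linarith
  have h5 : Fop Γ v i j * (1 - Ssum Γ v i j) = 1 := by
    rw [Fop]; field_simp
  have h4 : Fop Γ v i j < v i j := by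
    have hstep : Fop Γ v i j < 1 / ((Γ j i) ^ 2 * v j i) := by
      rw [Fop]
      apply one_div_lt_one_div_of_lt hG
      -- need strict: Γ²v < 1 - Ssum
      linarith
    have hstep2 : 1 / ((Γ j i) ^ 2 * v j i) ≤ v i j := by
      rw [div_le_iff₀ hG]
      have h6 := hv.2.1 i j h
      rw [← hsym.apply i j] at h6
      calc (1:ℝ) ≤ Γ j i ^ 2 * v i j * v j i := h6
        _ = v i j * (Γ j i ^ 2 * v j i) := by ring
    linarith
  exact ⟨h0, h1, h2, h3, h4, h5⟩

/-! ### the finite-sum bound -/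

lemma selfRet_short {a b : TVert Γ r} {L : List (TVert Γ r)}
    (hL : L ∈ SelfRet a b) (hlen : L.length ≤ 2) : L = [a] := by
  rcases L with _ | ⟨z, t⟩
  · exact absurd rfl hL.1
  rcases t with _ | ⟨z2, t2⟩
  · have : z = a := by have := hL.2.2.1; simpa using this
    rw [this]
  rcases t2 with _ | ⟨z3, t3⟩
  · exfalso
    have h1 : z = a := by have := hL.2.2.1; simpa using this
    have h2 : z2 = a := by
      have := hL.2.2.2.1; simpa using this
    have := (List.isChain_cons_cons.mp hL.2.1).1
    rw [h1, h2] at this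
    exact tadj_ne this rfl
  · simp at hlen

lemma walk_sum_bound (hsym : Γ.IsSymm) {v : Fin n → Fin n → ℝ} (hv : ConvVec Γ v) :
    ∀ m : ℕ, ∀ a b : TVert Γ r, TAdj a b → ∀ F : Finset (List (TVert Γ r)),
      (∀ L ∈ F, L ∈ SelfRet a b ∧ L.length ≤ m) →
      ∑ L ∈ F, |treeW Γ L| ≤ Fop Γ v (tlabel a) (tlabel b) := by
  intro m
  induction m using Nat.strong_induction_on with
  | _ m ih =>
  intro a b hab F hF
  have hadjji : Adj Γ (tlabel b) (tlabel a) := tadj_label hsym hab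
  have hadjij : Adj Γ (tlabel a) (tlabel b) := adj_symm hsym hadjji
  obtain ⟨hS0, hG1, hSpos, hF1, hFv, hFS⟩ := fop_facts hsym hv hadjij
  set i := tlabel a with hi
  set j := tlabel b with hj
  rcases lt_or_ge m 3 with hm | hm
  · -- all walks are trivial
    have hsub : F ⊆ {[a]} := by
      intro L hL
      have h2 := hF L hL
      have : L = [a] := selfRet_short h2.1 (by omega)
      simp [this]
    calc ∑ L ∈ F, |treeW Γ L| ≤ ∑ L ∈ ({[a]} : Finset (List (TVert Γ r))), |treeW Γ L| :=
          Finset.sum_le_sum_of_subset_of_nonneg hsub (fun _ _ _ => abs_nonneg _)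
      _ = 1 := by simp [treeW_single]
      _ ≤ Fop Γ v i j := hF1
  -- main case
  set F' := F.erase [a] with hF'
  have hkey : ∑ L ∈ F', |treeW Γ L| ≤ Ssum Γ (Fop Γ v) i j * Fop Γ v i j := by
    have hdec : ∀ L : {L // L ∈ F'}, ∃ x p q, TAdj a x ∧ x ≠ b ∧
        p ∈ SelfRet x a ∧ q ∈ SelfRet a b ∧ (L : List (TVert Γ r)) = a :: p ++ q := by
      rintro ⟨L, hL⟩
      have h1 : L ∈ F := Finset.mem_of_mem_erase hL
      have h2 : L ≠ [a] := Finset.ne_of_mem_erase hL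
      exact phi_decomp hab (hF L h1).1 h2
    choose X P Q hX hXb hP hQ hE using hdec
    have hattach : ∑ L ∈ F', |treeW Γ L| = ∑ L ∈ F'.attach, |treeW Γ L.val| := by
      exact (Finset.sum_attach _ _).symm
    rw [hattach]
    set Ufin := Finset.univ.filter (fun u => Adj Γ u i ∧ u ≠ j) with hUfin
    have hmaps : ∀ L ∈ F'.attach, tlabel (X L) ∈ Ufin := by
      intro L _
      have := nbr_adj_labels hsym hab (hX L) (hXb L)
      rw [hUfin]
      simp only [Finset.mem_filter, Finset.mem_univ, true_and]
      exact this
    rw [← Finset.sum_fiberwise_of_maps_to hmaps (fun L => |treeW Γ L.val|)]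
    have hfiber : ∀ u ∈ Ufin,
        ∑ L ∈ F'.attach.filter (fun L => tlabel (X L) = u), |treeW Γ L.val| ≤
          (Γ u i) ^ 2 * (Fop Γ v u i * Fop Γ v i j) := by
      intro u hu
      rw [hUfin, Finset.mem_filter] at hu
      obtain ⟨-, hui, huj⟩ := hu
      set fib := F'.attach.filter (fun L => tlabel (X L) = u) with hfib
      obtain ⟨w0, hw0a, hw0b, hw0l⟩ := nbr_exists hsym hab hui huj
      have hXw0 : ∀ L ∈ fib, X L = w0 := by
        intro L hL
        rw [hfib, Finset.mem_filter] at hL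
        exact nbr_label_inj (hX L) hw0a (by rw [hL.2, hw0l])
      have hterm : ∀ L ∈ fib, |treeW Γ L.val| =
          (Γ u i) ^ 2 * (|treeW Γ (P L)| * |treeW Γ (Q L)|) := by
        intro L hL
        rw [hfib, Finset.mem_filter] at hL
        rw [hE L, phi_weight hsym (hX L) (hP L) (hQ L), hL.2]
        rw [abs_mul, abs_mul, abs_of_nonneg (sq_nonneg _)]
      rw [Finset.sum_congr rfl hterm, ← Finset.mul_sum]
      apply mul_le_mul_of_nonneg_left _ (sq_nonneg _)
      set PQ := fib.image (fun L => (P L, Q L)) with hPQ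
      have hinj : ∀ L1 ∈ fib, ∀ L2 ∈ fib,
          (P L1, Q L1) = (P L2, Q L2) → L1 = L2 := by
        intro L1 _ L2 _ hpq
        apply Subtype.ext
        rw [hE L1, hE L2, ((Prod.mk.injEq _ _ _ _).mp hpq).1,
          ((Prod.mk.injEq _ _ _ _).mp hpq).2]
      have himgsum : ∑ L ∈ fib, |treeW Γ (P L)| * |treeW Γ (Q L)| =
          ∑ pr ∈ PQ, |treeW Γ pr.1| * |treeW Γ pr.2| := by
        rw [hPQ, Finset.sum_image hinj]
      rw [himgsum]
      have hsubs : PQ ⊆ (fib.image P) ×ˢ (fib.image Q) := by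
        intro pr hpr
        rw [hPQ, Finset.mem_image] at hpr
        obtain ⟨L, hL, rfl⟩ := hpr
        rw [Finset.mem_product]
        exact ⟨Finset.mem_image_of_mem _ hL, Finset.mem_image_of_mem _ hL⟩
      have hstep : ∑ pr ∈ PQ, |treeW Γ pr.1| * |treeW Γ pr.2| ≤
          ∑ pr ∈ (fib.image P) ×ˢ (fib.image Q), |treeW Γ pr.1| * |treeW Γ pr.2| :=
        Finset.sum_le_sum_of_subset_of_nonneg hsubs
          (fun pr _ _ => mul_nonneg (abs_nonneg _) (abs_nonneg _))
      have hprod : ∑ pr ∈ (fib.image P) ×ˢ (fib.image Q),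
          |treeW Γ pr.1| * |treeW Γ pr.2| =
          (∑ p ∈ fib.image P, |treeW Γ p|) * (∑ q ∈ fib.image Q, |treeW Γ q|) := by
        rw [Finset.sum_mul_sum, Finset.sum_product]
      have hlenPQ : ∀ L ∈ fib, (P L).length ≤ m - 2 ∧ (Q L).length ≤ m - 2 := by
        intro L hL
        have h1 : L.val ∈ F := Finset.mem_of_mem_erase L.prop
        have h2 := (hF L.val h1).2
        have h3 := congrArg List.length (hE L)
        simp only [List.length_cons, List.length_append] at h3
        have hP1 : 1 ≤ (P L).length := List.length_pos_iff.mpr (hP L).1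
        have hQ1 : 1 ≤ (Q L).length := List.length_pos_iff.mpr (hQ L).1
        omega
      have hbP : ∑ p ∈ fib.image P, |treeW Γ p| ≤ Fop Γ v u i := by
        have hres := ih (m - 2) (by omega) w0 a (tadj_symm hw0a) (fib.image P) ?_
        · rwa [hw0l] at hres
        · intro p hp
          rw [Finset.mem_image] at hp
          obtain ⟨L, hL, rfl⟩ := hp
          refine ⟨by rw [← hXw0 L hL]; exact hP L, (hlenPQ L hL).1⟩
      have hbQ : ∑ q ∈ fib.image Q, |treeW Γ q| ≤ Fop Γ v i j := by
        apply ih (m - 2) (by omega) a b hab (fib.image Q)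
        intro q hq
        rw [Finset.mem_image] at hq
        obtain ⟨L, hL, rfl⟩ := hq
        exact ⟨hQ L, (hlenPQ L hL).2⟩
      calc ∑ pr ∈ PQ, |treeW Γ pr.1| * |treeW Γ pr.2| ≤ _ := hstep
        _ = _ := hprod
        _ ≤ Fop Γ v u i * Fop Γ v i j := by
            apply mul_le_mul hbP hbQ (Finset.sum_nonneg (fun _ _ => abs_nonneg _))
            have := (fop_facts hsym hv hui).2.2.2.1
            linarith
    calc ∑ u ∈ Ufin, ∑ L ∈ F'.attach.filter (fun L => tlabel (X L) = u),
          |treeW Γ L.val|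
        ≤ ∑ u ∈ Ufin, (Γ u i) ^ 2 * (Fop Γ v u i * Fop Γ v i j) :=
          Finset.sum_le_sum hfiber
      _ = (∑ u ∈ Ufin, (Γ u i) ^ 2 * Fop Γ v u i) * Fop Γ v i j := by
          rw [Finset.sum_mul]
          apply Finset.sum_congr rfl
          intro u _; ring
      _ = Ssum Γ (Fop Γ v) i j * Fop Γ v i j := rfl
  -- assemble
  have hsplit : ∑ L ∈ F, |treeW Γ L| ≤ 1 + ∑ L ∈ F', |treeW Γ L| := by
    by_cases ha : [a] ∈ F
    · rw [← Finset.add_sum_erase F _ ha, ← hF']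
      have : |treeW Γ [a]| = 1 := by rw [treeW_single]; simp
      rw [this]
    · rw [hF', Finset.erase_eq_of_notMem ha]
      have : (0:ℝ) ≤ 1 := one_pos.le
      linarith [Finset.sum_nonneg (fun (L : List (TVert Γ r)) (_ : L ∈ F) => abs_nonneg (treeW Γ L))]
  have hSF : Ssum Γ (Fop Γ v) i j ≤ Ssum Γ v i j := by
    apply ssum_mono'
    intro u hu _
    exact le_of_lt (fop_facts hsym hv hu).2.2.2.2.1
  have hfinal : 1 + Ssum Γ v i j * Fop Γ v i j = Fop Γ v i j := by nlinarith [hFS]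
  calc ∑ L ∈ F, |treeW Γ L| ≤ 1 + ∑ L ∈ F', |treeW Γ L| := hsplit
    _ ≤ 1 + Ssum Γ (Fop Γ v) i j * Fop Γ v i j := by linarith
    _ ≤ 1 + Ssum Γ v i j * Fop Γ v i j := by
        have h8 : 0 ≤ Fop Γ v i j := by linarith
        nlinarith
    _ = Fop Γ v i j := hfinal

/-! ### summability and the tsum recursion -/

lemma selfRet_summable_abs (hsym : Γ.IsSymm) {v : Fin n → Fin n → ℝ} (hv : ConvVec Γ v)
    {a b : TVert Γ r} (hab : TAdj a b) :
    Summable (fun L : SelfRet a b => |treeW Γ L.val|) := by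
  apply summable_of_sum_le (c := Fop Γ v (tlabel a) (tlabel b))
    (fun L => abs_nonneg _)
  intro s
  have heq : ∑ x ∈ s, |treeW Γ (x : List (TVert Γ r))| =
      ∑ L ∈ s.image (Subtype.val : ↥(SelfRet a b) → List (TVert Γ r)), |treeW Γ L| :=
    (Finset.sum_image (f := fun L => |treeW Γ L|)
      (g := (Subtype.val : ↥(SelfRet a b) → List (TVert Γ r)))
      (fun x _ y _ h => Subtype.ext h)).symm
  rw [heq]
  apply walk_sum_bound hsym hv
    ((s.image (Subtype.val : ↥(SelfRet a b) → List (TVert Γ r))).sup List.length) a b hab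
  intro L hL
  constructor
  · rw [Finset.mem_image] at hL
    obtain ⟨x, -, rfl⟩ := hL
    exact x.prop
  · exact Finset.le_sup hL

lemma selfRet_tsum_abs_le (hsym : Γ.IsSymm) {v : Fin n → Fin n → ℝ} (hv : ConvVec Γ v)
    {a b : TVert Γ r} (hab : TAdj a b) :
    ∑' L : SelfRet a b, |treeW Γ L.val| ≤ Fop Γ v (tlabel a) (tlabel b) := by
  apply Summable.tsum_le_of_sum_le (selfRet_summable_abs hsym hv hab)
  intro s
  have heq : ∑ x ∈ s, |treeW Γ (x : List (TVert Γ r))| =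
      ∑ L ∈ s.image (Subtype.val : ↥(SelfRet a b) → List (TVert Γ r)), |treeW Γ L| :=
    (Finset.sum_image (f := fun L => |treeW Γ L|)
      (g := (Subtype.val : ↥(SelfRet a b) → List (TVert Γ r)))
      (fun x _ y _ h => Subtype.ext h)).symm
  rw [heq]
  apply walk_sum_bound hsym hv
    ((s.image (Subtype.val : ↥(SelfRet a b) → List (TVert Γ r))).sup List.length) a b hab
  intro L hL
  constructor
  · rw [Finset.mem_image] at hL
    obtain ⟨x, -, rfl⟩ := hL
    exact x.prop
  · exact Finset.le_sup hL

lemma selfRet_abs_tsum_le (hsym : Γ.IsSymm) {v : Fin n → Fin n → ℝ} (hv : ConvVec Γ v)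
    {a b : TVert Γ r} (hab : TAdj a b) :
    |∑' L : SelfRet a b, treeW Γ L.val| ≤ Fop Γ v (tlabel a) (tlabel b) := by
  have h1 := norm_tsum_le_tsum_norm
    (f := fun L : SelfRet a b => treeW Γ L.val) ?_
  · rw [Real.norm_eq_abs] at h1
    refine le_trans (le_trans h1 (le_of_eq ?_)) (selfRet_tsum_abs_le hsym hv hab)
    apply tsum_congr; intro L; rw [Real.norm_eq_abs]
  · simpa [Real.norm_eq_abs] using selfRet_summable_abs hsym hv hab

/-- canonical neighbor of `a` (avoiding `b`) with a given label. -/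
def nbrV (a b : TVert Γ r) (u : Fin n) : TVert Γ r :=
  if h : ∃ w : TVert Γ r, TAdj a w ∧ w ≠ b ∧ tlabel w = u then h.choose else a

lemma nbrV_spec (hsym : Γ.IsSymm) {a b : TVert Γ r} (hab : TAdj a b) {u : Fin n}
    (hu : Adj Γ u (tlabel a)) (huj : u ≠ tlabel b) :
    TAdj a (nbrV a b u) ∧ nbrV a b u ≠ b ∧ tlabel (nbrV a b u) = u := by
  have h := nbr_exists hsym hab hu huj
  rw [nbrV, dif_pos h]
  exact h.choose_spec

lemma rho_rec (hsym : Γ.IsSymm) {v : Fin n → Fin n → ℝ} (hv : ConvVec Γ v)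
    {a b : TVert Γ r} (hab : TAdj a b) :
    (∑' L : SelfRet a b, treeW Γ L.val) = 1 +
      (∑ u ∈ Finset.univ.filter (fun u => Adj Γ u (tlabel a) ∧ u ≠ tlabel b),
        (Γ u (tlabel a))^2 * (∑' L : SelfRet (nbrV a b u) a, treeW Γ L.val)) *
      (∑' L : SelfRet a b, treeW Γ L.val) := by
  classical
  set i := tlabel a with hi
  set j := tlabel b with hj
  set Ufin := Finset.univ.filter (fun u => Adj Γ u i ∧ u ≠ j) with hUfin
  have hUmem : ∀ u : ↥Ufin, Adj Γ u.val i ∧ u.val ≠ j :=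
    fun u => (Finset.mem_filter.mp u.prop).2
  have hspec : ∀ u : ↥Ufin, TAdj a (nbrV a b u.val) ∧ nbrV a b u.val ≠ b ∧
      tlabel (nbrV a b u.val) = u.val :=
    fun u => nbrV_spec hsym hab (hUmem u).1 (hUmem u).2
  set X := (u : ↥Ufin) × (↥(SelfRet (nbrV a b u.val) a) × ↥(SelfRet a b)) with hX
  have hΨmem : ∀ x : X, (a :: (x.2.1 : List (TVert Γ r)) ++ (x.2.2 : List (TVert Γ r)))
      ∈ SelfRet a b :=
    fun x => phi_mem hab (hspec x.1).1 (hspec x.1).2.1 x.2.1.prop x.2.2.prop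
  set Ψ : X → ↥(SelfRet a b) := fun x => ⟨_, hΨmem x⟩ with hΨ
  have hf : Summable (fun L : ↥(SelfRet a b) => treeW Γ (L : List (TVert Γ r))) :=
    (selfRet_summable_abs hsym hv hab).of_abs
  set L0 : ↥(SelfRet a b) := ⟨[a], singleton_mem_selfRet⟩ with hL0
  set g : ↥(SelfRet a b) → ℝ :=
    fun L => if L = L0 then 0 else treeW Γ (L : List (TVert Γ r)) with hgdef
  have hg : Summable g := by
    have hg' : Summable (fun L : ↥(SelfRet a b) =>
        if L = L0 then treeW Γ (L : List (TVert Γ r)) else 0) :=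
      summable_of_ne_finset_zero (s := {L0}) (by
        intro L hL
        simp only [Finset.mem_singleton] at hL
        simp [hL])
    have hE : g = fun L : ↥(SelfRet a b) => treeW Γ (L : List (TVert Γ r)) -
        (if L = L0 then treeW Γ (L : List (TVert Γ r)) else 0) := by
      funext L
      by_cases h : L = L0 <;> simp [hgdef, h]
    rw [hE]
    exact hf.sub hg'
  have hΨne : ∀ x : X, Ψ x ≠ L0 := by
    intro x h
    have hval : (a :: (x.2.1 : List (TVert Γ r)) ++ (x.2.2 : List (TVert Γ r)))
        = [a] := congrArg Subtype.val h
    have h2 : (x.2.1 : List (TVert Γ r)) ++ (x.2.2 : List (TVert Γ r)) = [] := by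
      simpa using hval
    exact x.2.1.prop.1 (List.append_eq_nil_iff.mp h2).1
  have hΨinj : Function.Injective Ψ := by
    rintro ⟨u, p, q⟩ ⟨u', p', q'⟩ h
    have hval : (a :: (p : List (TVert Γ r)) ++ (q : List (TVert Γ r))) =
        a :: (p' : List (TVert Γ r)) ++ (q' : List (TVert Γ r)) :=
      congrArg Subtype.val h
    obtain ⟨hxx, hpp, hqq⟩ := phi_inj (hspec u).1 p.prop q.prop p'.prop q'.prop
      (hspec u').1 hval
    have huu : u = u' := by
      apply Subtype.ext
      rw [← (hspec u).2.2, ← (hspec u').2.2, hxx]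
    subst huu
    have hp2 : p = p' := Subtype.ext hpp
    have hq2 : q = q' := Subtype.ext hqq
    rw [hp2, hq2]
  have hsupp : Function.support g ⊆ Set.range Ψ := by
    intro L hL
    have hne : L ≠ L0 := by
      intro h
      apply hL
      simp [hgdef, h]
    have hnev : (L : List (TVert Γ r)) ≠ [a] := fun h => hne (Subtype.ext h)
    obtain ⟨x, p, q, hax, hxb, hp, hq, hE⟩ := phi_decomp hab L.prop hnev
    have hu : tlabel x ∈ Ufin := by
      rw [hUfin]
      simp only [Finset.mem_filter, Finset.mem_univ, true_and]
      exact nbr_adj_labels hsym hab hax hxb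
    have hxn : x = nbrV a b (tlabel x) := by
      apply nbr_label_inj hax (hspec ⟨tlabel x, hu⟩).1
      rw [(hspec ⟨tlabel x, hu⟩).2.2]
    refine ⟨⟨⟨tlabel x, hu⟩, ⟨⟨p, hxn ▸ hp⟩, ⟨q, hq⟩⟩⟩, ?_⟩
    apply Subtype.ext
    exact hE.symm
  have key1 := Summable.tsum_eq_add_tsum_ite hf L0
  have key2 : ∑' x : X, g (Ψ x) = ∑' L, g L := hΨinj.tsum_eq hsupp
  have key3 : ∀ x : X, g (Ψ x) = (Γ (x.1 : Fin n) i)^2 *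
      (treeW Γ (x.2.1 : List (TVert Γ r)) * treeW Γ (x.2.2 : List (TVert Γ r))) := by
    intro x
    have h1 : g (Ψ x) = treeW Γ ((Ψ x : ↥(SelfRet a b)) : List (TVert Γ r)) := by
      simp [hgdef, hΨne x]
    rw [h1]
    show treeW Γ (a :: (x.2.1 : List (TVert Γ r)) ++ (x.2.2 : List (TVert Γ r))) = _
    rw [phi_weight hsym (hspec x.1).1 x.2.1.prop x.2.2.prop, (hspec x.1).2.2]
  have hsum_u : ∀ u : ↥Ufin, Summable (fun pq :
      ↥(SelfRet (nbrV a b u.val) a) × ↥(SelfRet a b) =>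
      (Γ u.val i)^2 * (treeW Γ pq.1.val * treeW Γ pq.2.val)) := by
    intro u
    apply Summable.mul_left
    apply Summable.of_abs
    have habs := (selfRet_summable_abs hsym hv (tadj_symm (hspec u).1)).mul_of_nonneg
      (selfRet_summable_abs hsym hv hab) (fun L => abs_nonneg _) (fun L => abs_nonneg _)
    apply habs.congr
    intro pq
    rw [abs_mul]
  have hsumX : Summable (fun x : X => (Γ (x.1 : Fin n) i)^2 *
      (treeW Γ (x.2.1 : List (TVert Γ r)) * treeW Γ (x.2.2 : List (TVert Γ r)))) :=
    (hg.comp_injective hΨinj).congr key3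
  have hprod : ∀ u : ↥Ufin, ∑' (pq : ↥(SelfRet (nbrV a b u.val) a) × ↥(SelfRet a b)),
      treeW Γ pq.1.val * treeW Γ pq.2.val =
      (∑' L : SelfRet (nbrV a b u.val) a, treeW Γ L.val) *
      (∑' L : SelfRet a b, treeW Γ L.val) := by
    intro u
    exact (tsum_mul_tsum_of_summable_norm
      (f := fun L : ↥(SelfRet (nbrV a b u.val) a) => treeW Γ L.val)
      (g := fun L : ↥(SelfRet a b) => treeW Γ L.val)
      (by simpa [Real.norm_eq_abs] using
        selfRet_summable_abs hsym hv (tadj_symm (hspec u).1))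
      (by simpa [Real.norm_eq_abs] using selfRet_summable_abs hsym hv hab)).symm
  have key5 : ∑' L, g L =
      (∑ u ∈ Ufin, (Γ u i)^2 * (∑' L : SelfRet (nbrV a b u) a, treeW Γ L.val)) *
        (∑' L : SelfRet a b, treeW Γ L.val) := by
    rw [← key2, tsum_congr key3, Summable.tsum_sigma' (fun u => hsum_u u) hsumX]
    show (∑' (u : ↥Ufin), ∑' (c : ↥(SelfRet (nbrV a b u.val) a) × ↥(SelfRet a b)),
        (Γ u.val i)^2 * (treeW Γ c.1.val * treeW Γ c.2.val)) = _
    have hinner : ∀ u : ↥Ufin,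
        (∑' (c : ↥(SelfRet (nbrV a b u.val) a) × ↥(SelfRet a b)),
          (Γ u.val i)^2 * (treeW Γ c.1.val * treeW Γ c.2.val)) =
        (Γ u.val i)^2 * ((∑' L : SelfRet (nbrV a b u.val) a, treeW Γ L.val) *
          (∑' L : SelfRet a b, treeW Γ L.val)) := by
      intro u
      rw [tsum_mul_left, hprod u]
    rw [tsum_congr hinner, tsum_fintype,
      Finset.sum_coe_sort Ufin (f := fun u => (Γ u i)^2 *
        ((∑' L : SelfRet (nbrV a b u) a, treeW Γ L.val) *
         (∑' L : SelfRet a b, treeW Γ L.val))),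
      Finset.sum_mul]
    exact Finset.sum_congr rfl (fun u _ => by ring)
  have hL0v : treeW Γ (L0 : List (TVert Γ r)) = 1 := treeW_single a
  conv_lhs => rw [key1]
  rw [hL0v, key5]

end Aux

/-- Lemma on the computation tree: if `f` is convex decomposable, the total weight of
the self-returning walks from `ĩ` (label `i`) that never cross the edge `(ĩ, j̃)`
(label `j`) is absolutely convergent and equals `γ*_{ij}`. -/
theorem stmt14 {n : ℕ} (Γ : Matrix (Fin n) (Fin n) ℝ) (hsym : Γ.IsSymm)
    (hdiag : ∀ i, Γ i i = 1) (hpd : Γ.PosDef)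
    (hcd : ∃ v, ConvVec Γ v)
    (γs : Fin n → Fin n → ℝ)
    (hfix : ∀ i j, Adj Γ i j → γs i j = 1 / (1 - Ssum Γ γs i j))
    (hbnd : ∀ v, ConvVec Γ v → ∀ i j, Adj Γ i j → 0 < γs i j ∧ γs i j < v i j)
    (r : Fin n) (iv jv : TVert Γ r) (hadj : TAdj iv jv) :
    Summable (fun L : SelfRet iv jv => |treeW Γ L.val|) ∧
    (∑' L : SelfRet iv jv, treeW Γ L.val) = γs (tlabel iv) (tlabel jv) := by
  classical
  obtain ⟨v, hv⟩ := hcd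
  refine ⟨selfRet_summable_abs hsym hv hadj, ?_⟩
  -- per-edge facts
  have edge_facts : ∀ i' j' : Fin n, Adj Γ i' j' →
      0 < γs i' j' ∧ γs i' j' < v i' j' ∧ 0 < 1 - Ssum Γ γs i' j' ∧
      γs i' j' * (1 - Ssum Γ γs i' j') = 1 ∧
      Ssum Γ γs i' j' ≤ Ssum Γ v i' j' ∧ γs i' j' ≤ Fop Γ v i' j' := by
    intro i' j' h
    have hγpos := (hbnd v hv i' j' h).1
    have hγv := (hbnd v hv i' j' h).2
    have h1S : 0 < 1 - Ssum Γ γs i' j' := by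
      by_contra hcon
      push_neg at hcon
      have := hfix i' j' h
      rcases lt_or_eq_of_le hcon with hlt | heq
      · have : γs i' j' ≤ 0 := by
          rw [this]
          exact le_of_lt (div_neg_of_pos_of_neg one_pos hlt)
        linarith
      · rw [heq] at this
        simp at this
        linarith
    have hid : γs i' j' * (1 - Ssum Γ γs i' j') = 1 := by
      rw [hfix i' j' h]
      field_simp
    have hmono : Ssum Γ γs i' j' ≤ Ssum Γ v i' j' := by
      apply ssum_mono'
      intro u hu _
      exact le_of_lt (hbnd v hv u i' hu).2
    have hγF : γs i' j' ≤ Fop Γ v i' j' := by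
      obtain ⟨-, -, hSvpos, -, -, -⟩ := fop_facts hsym hv h
      rw [hfix i' j' h, Fop]
      apply one_div_le_one_div_of_le hSvpos
      linarith
    exact ⟨hγpos, hγv, h1S, hid, hmono, hγF⟩
  -- edge set and contraction constants
  set Efin : Finset (Fin n × Fin n) :=
    Finset.univ.filter (fun e => Adj Γ e.1 e.2) with hEfin
  have hadjji : Adj Γ (tlabel jv) (tlabel iv) := tadj_label hsym hadj
  have hadjij : Adj Γ (tlabel iv) (tlabel jv) := adj_symm hsym hadjji
  have hEne : Efin.Nonempty := ⟨(tlabel iv, tlabel jv), by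
    rw [hEfin]; simp only [Finset.mem_filter, Finset.mem_univ, true_and]; exact hadjij⟩
  set θ := Efin.sup' hEne
    (fun e => (Fop Γ v e.1 e.2 - γs e.1 e.2) / (v e.1 e.2 - γs e.1 e.2)) with hθ
  set c := Efin.sup' hEne
    (fun e => (Fop Γ v e.1 e.2 + v e.1 e.2) / (v e.1 e.2 - γs e.1 e.2)) with hc
  have hEmem : ∀ e ∈ Efin, Adj Γ e.1 e.2 := by
    intro e he
    rw [hEfin, Finset.mem_filter] at he
    exact he.2
  have hwpos : ∀ e ∈ Efin, 0 < v e.1 e.2 - γs e.1 e.2 := by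
    intro e he
    have h := edge_facts e.1 e.2 (hEmem e he)
    linarith [h.2.1]
  have hθ1 : θ < 1 := by
    rw [hθ, Finset.sup'_lt_iff]
    intro e he
    rw [div_lt_one (hwpos e he)]
    obtain ⟨-, -, -, -, hFvlt, -⟩ := fop_facts hsym hv (hEmem e he)
    have := (edge_facts e.1 e.2 (hEmem e he)).1
    linarith
  have hθ0 : 0 ≤ θ := by
    refine le_trans ?_ (Finset.le_sup' _ (hEne.choose_spec))
    set e := hEne.choose
    have he := hEne.choose_spec
    apply div_nonneg _ (le_of_lt (hwpos e he))
    have := (edge_facts e.1 e.2 (hEmem e he)).2.2.2.2.2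
    linarith
  have hc0 : 0 ≤ c := by
    refine le_trans ?_ (Finset.le_sup' _ (hEne.choose_spec))
    set e := hEne.choose
    have he := hEne.choose_spec
    apply div_nonneg _ (le_of_lt (hwpos e he))
    obtain ⟨-, -, -, hF1, hFvlt, -⟩ := fop_facts hsym hv (hEmem e he)
    have := (edge_facts e.1 e.2 (hEmem e he)).1
    nlinarith
  -- per-edge consequences of the sup' definitions
  have hθle : ∀ i' j', Adj Γ i' j' →
      Fop Γ v i' j' - γs i' j' ≤ θ * (v i' j' - γs i' j') := by
    intro i' j' h
    have he : (i', j') ∈ Efin := by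
      rw [hEfin]; simp only [Finset.mem_filter, Finset.mem_univ, true_and]; exact h
    have h1 : (Fop Γ v i' j' - γs i' j') / (v i' j' - γs i' j') ≤ θ :=
      Finset.le_sup' (f := fun e : Fin n × Fin n =>
        (Fop Γ v e.1 e.2 - γs e.1 e.2) / (v e.1 e.2 - γs e.1 e.2)) he
    have h2 := hwpos (i', j') he
    calc Fop Γ v i' j' - γs i' j'
        = (Fop Γ v i' j' - γs i' j') / (v i' j' - γs i' j') * (v i' j' - γs i' j') := by
          field_simp
      _ ≤ θ * (v i' j' - γs i' j') := by
          apply mul_le_mul_of_nonneg_right h1 (le_of_lt h2)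
  have hcle : ∀ i' j', Adj Γ i' j' →
      Fop Γ v i' j' + v i' j' ≤ c * (v i' j' - γs i' j') := by
    intro i' j' h
    have he : (i', j') ∈ Efin := by
      rw [hEfin]; simp only [Finset.mem_filter, Finset.mem_univ, true_and]; exact h
    have h1 : (Fop Γ v i' j' + v i' j') / (v i' j' - γs i' j') ≤ c :=
      Finset.le_sup' (f := fun e : Fin n × Fin n =>
        (Fop Γ v e.1 e.2 + v e.1 e.2) / (v e.1 e.2 - γs e.1 e.2)) he
    have h2 := hwpos (i', j') he
    calc Fop Γ v i' j' + v i' j'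
        = (Fop Γ v i' j' + v i' j') / (v i' j' - γs i' j') * (v i' j' - γs i' j') := by
          field_simp
      _ ≤ c * (v i' j' - γs i' j') := by
          apply mul_le_mul_of_nonneg_right h1 (le_of_lt h2)
  -- the geometric decay
  have decay : ∀ m : ℕ, ∀ a b : TVert Γ r, TAdj a b →
      |(∑' L : SelfRet a b, treeW Γ L.val) - γs (tlabel a) (tlabel b)| ≤
        c * θ^m * (v (tlabel a) (tlabel b) - γs (tlabel a) (tlabel b)) := by
    intro m
    induction m with
    | zero =>
      intro a b hab
      have hji : Adj Γ (tlabel b) (tlabel a) := tadj_label hsym hab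
      have hij : Adj Γ (tlabel a) (tlabel b) := adj_symm hsym hji
      have hρ := selfRet_abs_tsum_le hsym hv hab
      obtain ⟨hγpos, hγv, -, -, -, -⟩ := edge_facts _ _ hij
      rw [pow_zero, mul_one]
      have habs : |(∑' L : SelfRet a b, treeW Γ L.val) - γs (tlabel a) (tlabel b)| ≤
          Fop Γ v (tlabel a) (tlabel b) + v (tlabel a) (tlabel b) := by
        have h1 := abs_sub (∑' L : SelfRet a b, treeW Γ L.val)
          (γs (tlabel a) (tlabel b))
        have h2 : |γs (tlabel a) (tlabel b)| = γs (tlabel a) (tlabel b) :=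
          abs_of_pos hγpos
        calc |(∑' L : SelfRet a b, treeW Γ L.val) - γs (tlabel a) (tlabel b)|
            ≤ |(∑' L : SelfRet a b, treeW Γ L.val)| + |γs (tlabel a) (tlabel b)| :=
              abs_sub _ _
          _ ≤ Fop Γ v (tlabel a) (tlabel b) + v (tlabel a) (tlabel b) := by
              rw [h2]; linarith
      exact le_trans habs (hcle _ _ hij)
    | succ m ihm =>
      intro a b hab
      have hji : Adj Γ (tlabel b) (tlabel a) := tadj_label hsym hab
      have hij : Adj Γ (tlabel a) (tlabel b) := adj_symm hsym hji
      set i := tlabel a with hi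
      set j := tlabel b with hj
      obtain ⟨hγpos, hγv, h1Sγ, hγid, hSmono, hγF⟩ := edge_facts i j hij
      obtain ⟨hSv0, hG1, hSvpos, hF1, hFvlt, hFSid⟩ := fop_facts hsym hv hij
      set ρ := ∑' L : SelfRet a b, treeW Γ L.val with hρdef
      set Ufin := Finset.univ.filter (fun u => Adj Γ u i ∧ u ≠ j) with hUfin
      set Sρ := ∑ u ∈ Ufin, (Γ u i)^2 * (∑' L : SelfRet (nbrV a b u) a, treeW Γ L.val)
        with hSρ
      have hrec : ρ = 1 + Sρ * ρ := rho_rec hsym hv hab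
      have he1 : ρ * Sρ = ρ - 1 := by linarith [hrec, mul_comm Sρ ρ]
      have he2 : γs i j * Ssum Γ γs i j = γs i j - 1 := by linarith [hγid]
      have hiden : ρ - γs i j = ρ * γs i j * (Sρ - Ssum Γ γs i j) := by
        linear_combination (-(γs i j)) * he1 + ρ * he2
      -- bound |Sρ - Sγ|
      have hUspec : ∀ u ∈ Ufin, Adj Γ u i ∧ u ≠ j := by
        intro u hu
        rw [hUfin, Finset.mem_filter] at hu
        exact hu.2
      have hterm : ∀ u ∈ Ufin,
          |(Γ u i)^2 * (∑' L : SelfRet (nbrV a b u) a, treeW Γ L.val) -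
            (Γ u i)^2 * γs u i| ≤
          (Γ u i)^2 * (c * θ^m * (v u i - γs u i)) := by
        intro u hu
        obtain ⟨hu1, hu2⟩ := hUspec u hu
        obtain ⟨hna, hnb, hnl⟩ := nbrV_spec hsym hab hu1 hu2
        have := ihm (nbrV a b u) a (tadj_symm hna)
        rw [hnl] at this
        rw [← mul_sub, abs_mul, abs_of_nonneg (sq_nonneg _)]
        exact mul_le_mul_of_nonneg_left this (sq_nonneg _)
      have hSdiff : |Sρ - Ssum Γ γs i j| ≤ c * θ^m * (Ssum Γ v i j - Ssum Γ γs i j) := by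
        rw [hSρ, Ssum, ← Finset.sum_sub_distrib]
        calc |∑ u ∈ Ufin, ((Γ u i)^2 * (∑' L : SelfRet (nbrV a b u) a, treeW Γ L.val) -
              (Γ u i)^2 * γs u i)|
            ≤ ∑ u ∈ Ufin, |(Γ u i)^2 * (∑' L : SelfRet (nbrV a b u) a, treeW Γ L.val) -
              (Γ u i)^2 * γs u i| := Finset.abs_sum_le_sum_abs _ _
          _ ≤ ∑ u ∈ Ufin, (Γ u i)^2 * (c * θ^m * (v u i - γs u i)) :=
              Finset.sum_le_sum hterm
          _ = c * θ^m * (Ssum Γ v i j - Ssum Γ γs i j) := by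
              rw [Ssum, Ssum, ← Finset.sum_sub_distrib, Finset.mul_sum]
              apply Finset.sum_congr rfl
              intro u _; ring
      have hρb : |ρ| ≤ Fop Γ v i j := selfRet_abs_tsum_le hsym hv hab
      -- assemble
      have hmain : |ρ - γs i j| ≤ Fop Γ v i j * γs i j * (c * θ^m *
          (Ssum Γ v i j - Ssum Γ γs i j)) := by
        rw [hiden, abs_mul, abs_mul, abs_of_pos hγpos]
        have h1 : |ρ| * γs i j ≤ Fop Γ v i j * γs i j :=
          mul_le_mul_of_nonneg_right hρb (le_of_lt hγpos)
        have h2 : (0:ℝ) ≤ |Sρ - Ssum Γ γs i j| := abs_nonneg _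
        have h3 : (0:ℝ) ≤ Fop Γ v i j * γs i j := by nlinarith
        calc |ρ| * γs i j * |Sρ - Ssum Γ γs i j|
            ≤ Fop Γ v i j * γs i j * |Sρ - Ssum Γ γs i j| :=
              mul_le_mul_of_nonneg_right h1 h2
          _ ≤ Fop Γ v i j * γs i j * (c * θ^m * (Ssum Γ v i j - Ssum Γ γs i j)) :=
              mul_le_mul_of_nonneg_left hSdiff h3
      have hFid : Fop Γ v i j - γs i j =
          Fop Γ v i j * γs i j * (Ssum Γ v i j - Ssum Γ γs i j) := by
        linear_combination γs i j * hFSid - Fop Γ v i j * hγid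
      calc |ρ - γs i j|
          ≤ Fop Γ v i j * γs i j * (c * θ^m * (Ssum Γ v i j - Ssum Γ γs i j)) := hmain
        _ = c * θ^m * (Fop Γ v i j * γs i j * (Ssum Γ v i j - Ssum Γ γs i j)) := by ring
        _ = c * θ^m * (Fop Γ v i j - γs i j) := by rw [← hFid]
        _ ≤ c * θ^m * (θ * (v i j - γs i j)) := by
            apply mul_le_mul_of_nonneg_left (hθle i j hij)
            positivity
        _ = c * θ^(m+1) * (v i j - γs i j) := by ring
  -- take the limit
  have htend : Filter.Tendsto
      (fun m : ℕ => c * θ^m * (v (tlabel iv) (tlabel jv) - γs (tlabel iv) (tlabel jv)))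
      atTop (nhds 0) := by
    have h1 := tendsto_pow_atTop_nhds_zero_of_lt_one hθ0 hθ1
    have h2 := (h1.const_mul c).mul_const
      (v (tlabel iv) (tlabel jv) - γs (tlabel iv) (tlabel jv))
    simpa using h2
  have hle0 : |(∑' L : SelfRet iv jv, treeW Γ L.val) -
      γs (tlabel iv) (tlabel jv)| ≤ 0 :=
    ge_of_tendsto' htend (fun m => decay m iv jv hadj)
  have := abs_nonneg ((∑' L : SelfRet iv jv, treeW Γ L.val) -
    γs (tlabel iv) (tlabel jv))
  have habs0 : |(∑' L : SelfRet iv jv, treeW Γ L.val) -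
      γs (tlabel iv) (tlabel jv)| = 0 := le_antisymm hle0 this
  rw [abs_eq_zero, sub_eq_zero] at habs0
  exact habs0
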